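/- Assume κ⁰ > 0, κ¹ > 0 and that the pair is nondegenerate. If ρ¹_{j_*} = κ¹/(m−1), then σ_{i,j_*} has no zeros in (0,∞) for any index i. If ρ¹_{j_*} > κ¹/(m−1), then σ_{i,j_*} has a zero in (0,∞) if and only if i < i_*. -/

import Mathlib

theorem stmt_4
    (m : ℕ) (hm : 3 ≤ m)
    (κ₀ κ₁ : ℝ)
    (ρ₀ ρ₁ : ℕ → ℝ)
    (hρ₀one : ρ₀ 1 = 0) (hρ₁one : ρ₁ 1 = 0)
    (hρ₀mono : ∀ i j : ℕ, 1 ≤ i → i < j → ρ₀ i < ρ₀ j)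
    (hρ₁mono : ∀ i j : ℕ, 1 ≤ i → i < j → ρ₁ i < ρ₁ j)
    (hρ₀unb : ∀ C : ℝ, ∃ i : ℕ, 1 ≤ i ∧ C < ρ₀ i)
    (hρ₁unb : ∀ C : ℝ, ∃ j : ℕ, 1 ≤ j ∧ C < ρ₁ j)
    (σ : ℕ → ℕ → ℝ → ℝ)
    (hσ : ∀ (i j : ℕ) (l : ℝ), 0 < l →
      σ i j l = ρ₀ i + ρ₁ j / l - (κ₀ + κ₁ / l) / ((m : ℝ) - 1))
    (hκ₀ : 0 < κ₀) (hκ₁ : 0 < κ₁)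
    (istar jstar : ℕ)
    (histar1 : 1 ≤ istar) (histar2 : κ₀ / ((m : ℝ) - 1) ≤ ρ₀ istar)
    (histar3 : ∀ i : ℕ, 1 ≤ i → i < istar → ρ₀ i < κ₀ / ((m : ℝ) - 1))
    (hjstar1 : 1 ≤ jstar) (hjstar2 : κ₁ / ((m : ℝ) - 1) ≤ ρ₁ jstar)
    (hjstar3 : ∀ j : ℕ, 1 ≤ j → j < jstar → ρ₁ j < κ₁ / ((m : ℝ) - 1))
    (hnondeg : ¬ (ρ₀ istar = κ₀ / ((m : ℝ) - 1) ∧ ρ₁ jstar = κ₁ / ((m : ℝ) - 1))) :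
    (ρ₁ jstar = κ₁ / ((m : ℝ) - 1) →
      ∀ i : ℕ, 1 ≤ i → ∀ l : ℝ, 0 < l → σ i jstar l ≠ 0) ∧
    (κ₁ / ((m : ℝ) - 1) < ρ₁ jstar →
      ∀ i : ℕ, 1 ≤ i → ((∃ l : ℝ, 0 < l ∧ σ i jstar l = 0) ↔ i < istar)) := by
  have hm1 : (0:ℝ) < (m:ℝ) - 1 := by
    have : (3:ℝ) ≤ (m:ℝ) := by exact_mod_cast hm
    linarith
  have key : ∀ (i : ℕ) (l : ℝ), 0 < l →
      σ i jstar l = (ρ₀ i - κ₀ / ((m:ℝ) - 1)) + (ρ₁ jstar - κ₁ / ((m:ℝ) - 1)) / l := by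
    intro i l hl
    rw [hσ i jstar l hl]
    field_simp
    ring
  have hge : ∀ i : ℕ, istar ≤ i → ρ₀ istar ≤ ρ₀ i := by
    intro i hi
    rcases eq_or_lt_of_le hi with h | h
    · rw [h]
    · exact le_of_lt (hρ₀mono istar i histar1 h)
  constructor
  · intro heq i hi l hl
    have histar2' : κ₀ / ((m:ℝ) - 1) < ρ₀ istar := by
      rcases lt_or_eq_of_le histar2 with h | h
      · exact h
      · exact absurd ⟨h.symm, heq⟩ hnondeg
    rw [key i l hl, heq]
    simp only [sub_self, zero_div, add_zero]
    rcases lt_or_ge i istar with h | h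
    · have := histar3 i hi h
      intro hc; linarith [sub_eq_zero.mp hc]
    · have := hge i h
      intro hc; linarith [sub_eq_zero.mp hc]
  · intro hlt i hi
    set d := ρ₁ jstar - κ₁ / ((m:ℝ) - 1) with hd
    have hdpos : 0 < d := by simp [hd]; linarith
    constructor
    · rintro ⟨l, hl, hzero⟩
      by_contra hni
      push_neg at hni
      have h1 : κ₀ / ((m:ℝ) - 1) ≤ ρ₀ i := le_trans histar2 (hge i hni)
      have h2 : 0 < d / l := div_pos hdpos hl
      rw [key i l hl] at hzero
      linarith
    · intro hilt
      have hc : 0 < κ₀ / ((m:ℝ) - 1) - ρ₀ i := by linarith [histar3 i hi hilt]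
      refine ⟨d / (κ₀ / ((m:ℝ) - 1) - ρ₀ i), div_pos hdpos hc, ?_⟩
      rw [key i _ (div_pos hdpos hc)]
      field_simp
      ring
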